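/- Let $\mu, c, g_0$ be real and let $y$ be a real-valued $2\pi$-periodic trigonometric polynomial. Then the quasiperiodic linearized Babenko operator $\hat S_{1,\mu}$ is self-adjoint with respect to the complex $L^2$ inner product: for all trigonometric polynomials $f$ and $g$, $\langle \hat S_{1,\mu} f, g\rangle = \langle f, \hat S_{1,\mu} g\rangle$, where $\langle f, g\rangle = \int_{-\pi}^{\pi} f(u)\,\overline{g(u)}\, du$. -/

import Mathlib

open MeasureTheory
open scoped Real

/-- A trigonometric polynomial `u ↦ ∑ₖ aₖ e^{iku}`, represented by its finitely supported
Fourier coefficients; multiplication of coefficients is convolution, which corresponds to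
pointwise multiplication of the associated functions. -/
abbrev TrigPoly : Type := AddMonoidAlgebra ℂ ℤ

/-- Evaluation of a trigonometric polynomial: `teval c u = ∑ k, c k * exp (i k u)`. -/
noncomputable def teval (c : TrigPoly) (u : ℝ) : ℂ :=
  Finsupp.sum c.coeff fun k a => a * Complex.exp (Complex.I * (k : ℂ) * (u : ℂ))

/-- The Fourier multiplier operator with symbol `m`. -/
noncomputable def mulOp (m : ℤ → ℂ) (c : TrigPoly) : TrigPoly :=
  AddMonoidAlgebra.ofCoeff (Finsupp.sum c.coeff fun k a => Finsupp.single k (m k * a))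

/-- The circular Hilbert transform `Ĥ e^{iku} = i sign(k) e^{iku}` (with `sign 0 = 0`). -/
noncomputable def Hop : TrigPoly → TrigPoly := mulOp fun k => Complex.I * (Int.sign k : ℂ)

/-- The operator `k̂ e^{iku} = |k| e^{iku}`. -/
noncomputable def Kop : TrigPoly → TrigPoly := mulOp fun k => ((|k| : ℤ) : ℂ)

/-- Differentiation `∂ᵤ e^{iku} = i k e^{iku}`. -/
noncomputable def Dop : TrigPoly → TrigPoly := mulOp fun k => Complex.I * (k : ℂ)

/-- A trigonometric polynomial is real-valued. -/
def RealValued (c : TrigPoly) : Prop := ∀ u : ℝ, (teval c u).im = 0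


/-- The quasiperiodic Hilbert transform `Ĥμ e^{iku} = i sign(k+μ) e^{iku}` (`sign 0 = 0`). -/
noncomputable def Hmu (μ : ℝ) : TrigPoly → TrigPoly :=
  mulOp fun k => Complex.I * ((Real.sign ((k : ℝ) + μ) : ℝ) : ℂ)

/-- The quasiperiodic multiplier operator `k̂μ e^{iku} = |k+μ| e^{iku}`. -/
noncomputable def Kmu (μ : ℝ) : TrigPoly → TrigPoly :=
  mulOp fun k => ((|(k : ℝ) + μ| : ℝ) : ℂ)

/-- The quasiperiodic linearized Babenko operator
`Ŝ₁μ f = (c²k̂μ - g₀)f - g₀[ y (k̂μ f) + f (k̂y) + k̂μ(yf) ]`. -/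
noncomputable def S1mu (μ c g0 : ℝ) (y f : TrigPoly) : TrigPoly :=
  (c ^ 2 : ℂ) • Kmu μ f - (g0 : ℂ) • f
    - (g0 : ℂ) • (y * Kmu μ f + f * Kop y + Kmu μ (y * f))

noncomputable def expHom (u : ℝ) : Multiplicative ℤ →* ℂ where
  toFun k := Complex.exp (Complex.I * (k.toAdd : ℂ) * (u : ℂ))
  map_one' := by simp
  map_mul' k l := by
    simp only [toAdd_mul, Int.cast_add, ← Complex.exp_add]
    ring_nf

lemma teval_eq_lift (c : TrigPoly) (u : ℝ) :
    teval c u = AddMonoidAlgebra.lift ℂ ℂ ℤ (expHom u) c := by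
  rw [AddMonoidAlgebra.lift_apply]
  rfl

lemma teval_mul (a b : TrigPoly) (u : ℝ) : teval (a*b) u = teval a u * teval b u := by
  simp [teval_eq_lift, map_mul]

lemma teval_single (k : ℤ) (u : ℝ) :
    teval (AddMonoidAlgebra.single k (1:ℂ)) u = Complex.exp (Complex.I * (k:ℂ) * (u:ℂ)) := by
  rw [teval, AddMonoidAlgebra.coeff_single, Finsupp.sum_single_index (by simp), one_mul]

lemma teval_continuous (c : TrigPoly) : Continuous fun u => teval c u := by
  unfold teval Finsupp.sum
  exact continuous_finset_sum _ fun k _ =>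
    continuous_const.mul ((continuous_const.mul Complex.continuous_ofReal).cexp)

lemma integral_exp_int (k : ℤ) :
    (∫ u in (-π)..π, Complex.exp (Complex.I * (k:ℂ) * (u:ℂ)))
      = if k = 0 then 2*(π:ℂ) else 0 := by
  rcases eq_or_ne k 0 with rfl | hk
  · simp; ring
  · have hc : (Complex.I * (k:ℂ)) ≠ 0 :=
      mul_ne_zero Complex.I_ne_zero (by exact_mod_cast hk)
    rw [if_neg hk]
    have h := integral_exp_mul_complex (a := -π) (b := π) hc
    have key : Complex.exp (Complex.I * (k:ℂ) * ((π:ℝ):ℂ))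
        = Complex.exp (Complex.I * (k:ℂ) * ((-π:ℝ):ℂ)) := by
      rw [show (Complex.I * (k:ℂ) * ((π:ℝ):ℂ))
          = Complex.I * (k:ℂ) * ((-π:ℝ):ℂ) + ((k:ℤ):ℂ) * (2*(π:ℂ)*Complex.I) by
        push_cast; ring]
      rw [Complex.exp_add, Complex.exp_int_mul_two_pi_mul_I, mul_one]
    rw [h, key, sub_self, zero_div]


lemma exp_mul_conj_exp (k l : ℤ) (u : ℝ) :
    Complex.exp (Complex.I * (k:ℂ) * (u:ℂ))
        * (starRingEnd ℂ) (Complex.exp (Complex.I * (l:ℂ) * (u:ℂ)))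
      = Complex.exp (Complex.I * ((k - l : ℤ):ℂ) * (u:ℂ)) := by
  rw [← Complex.exp_conj, ← Complex.exp_add]
  congr 1
  simp only [map_mul, Complex.conj_I, Complex.conj_ofReal, map_intCast]
  push_cast
  ring

lemma teval_eq_sum (c : TrigPoly) (s : Finset ℤ) (hc : c.coeff.support ⊆ s) (u : ℝ) :
    teval c u = ∑ k ∈ s, c.coeff k * Complex.exp (Complex.I * (k:ℂ) * (u:ℂ)) := by
  rw [teval, Finsupp.sum]
  exact Finset.sum_subset hc fun k _ hk => by
    simp [Finsupp.notMem_support_iff.mp hk]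

lemma integral_teval_mul_conj (f g : TrigPoly) (s : Finset ℤ)
    (hf : f.coeff.support ⊆ s) (hg : g.coeff.support ⊆ s) :
    (∫ u in (-π)..π, teval f u * (starRingEnd ℂ) (teval g u))
      = 2*(π:ℂ) * ∑ k ∈ s, f.coeff k * (starRingEnd ℂ) (g.coeff k) := by
  have cont : ∀ k l : ℤ, Continuous fun u : ℝ =>
      (f.coeff k * (starRingEnd ℂ) (g.coeff l)) * Complex.exp (Complex.I * ((k - l : ℤ):ℂ) * (u:ℂ)) :=
    fun k l => continuous_const.mul ((continuous_const.mul Complex.continuous_ofReal).cexp)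
  have hpt : ∀ u : ℝ, teval f u * (starRingEnd ℂ) (teval g u)
      = ∑ k ∈ s, ∑ l ∈ s,
          (f.coeff k * (starRingEnd ℂ) (g.coeff l)) * Complex.exp (Complex.I * ((k - l : ℤ):ℂ) * (u:ℂ)) := by
    intro u
    rw [teval_eq_sum f s hf u, teval_eq_sum g s hg u, map_sum, Finset.sum_mul_sum]
    refine Finset.sum_congr rfl fun k _ => Finset.sum_congr rfl fun l _ => ?_
    rw [map_mul, ← exp_mul_conj_exp k l u]
    ring
  simp only [hpt]
  rw [intervalIntegral.integral_finset_sum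
    (fun k _ => (continuous_finset_sum _ fun l _ => cont k l).intervalIntegrable _ _)]
  rw [Finset.mul_sum]
  refine Finset.sum_congr rfl fun k hk => ?_
  rw [intervalIntegral.integral_finset_sum (fun l _ => (cont k l).intervalIntegrable _ _)]
  have : ∀ l ∈ s, (∫ u in (-π)..π,
      (f.coeff k * (starRingEnd ℂ) (g.coeff l)) * Complex.exp (Complex.I * ((k - l : ℤ):ℂ) * (u:ℂ)))
      = if k = l then 2*(π:ℂ) * (f.coeff k * (starRingEnd ℂ) (g.coeff l)) else 0 := by
    intro l _
    rw [intervalIntegral.integral_const_mul, integral_exp_int]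
    simp only [sub_eq_zero]
    split <;> ring
  rw [Finset.sum_congr rfl this, Finset.sum_ite_eq s k
    (fun l => 2*(π:ℂ) * (f.coeff k * (starRingEnd ℂ) (g.coeff l))), if_pos hk]


lemma mulOp_apply (m : ℤ → ℂ) (c : TrigPoly) (k : ℤ) : (mulOp m c).coeff k = m k * c.coeff k := by
  rw [mulOp, AddMonoidAlgebra.coeff_ofCoeff, Finsupp.sum_apply, Finsupp.sum]
  rw [Finset.sum_eq_single k (fun j _ hj => Finsupp.single_eq_of_ne' hj)
    (fun hk => by simp [Finsupp.notMem_support_iff.mp hk])]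
  rw [Finsupp.single_eq_same]

lemma support_mulOp_subset {m : ℤ → ℂ} {c : TrigPoly} : (mulOp m c).coeff.support ⊆ c.coeff.support := by
  intro k hk
  simp only [Finsupp.mem_support_iff] at *
  intro h
  exact hk (by rw [mulOp_apply, h, mul_zero])

lemma J_mulOp (m : ℤ → ℂ) (hm : ∀ k, (starRingEnd ℂ) (m k) = m k) (f g : TrigPoly) :
    (∫ u in (-π)..π, teval (mulOp m f) u * (starRingEnd ℂ) (teval g u))
      = ∫ u in (-π)..π, teval f u * (starRingEnd ℂ) (teval (mulOp m g) u) := by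
  rw [integral_teval_mul_conj _ _ (f.coeff.support ∪ g.coeff.support)
      (support_mulOp_subset.trans Finset.subset_union_left) Finset.subset_union_right,
    integral_teval_mul_conj _ _ (f.coeff.support ∪ g.coeff.support)
      Finset.subset_union_left (support_mulOp_subset.trans Finset.subset_union_right)]
  congr 1
  refine Finset.sum_congr rfl fun k _ => ?_
  rw [mulOp_apply, mulOp_apply, map_mul, hm]
  ring

lemma intervalIntegral_conj (f : ℝ → ℂ) (a b : ℝ) :
    (∫ u in a..b, (starRingEnd ℂ) (f u)) = (starRingEnd ℂ) (∫ u in a..b, f u) := by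
  unfold intervalIntegral
  rw [integral_conj, integral_conj, map_sub]

lemma coeff_eq (c : TrigPoly) (k : ℤ) :
    (∫ u in (-π)..π, teval c u * (starRingEnd ℂ) (teval (AddMonoidAlgebra.single k (1:ℂ)) u))
      = 2*(π:ℂ) * c.coeff k := by
  rw [integral_teval_mul_conj c (AddMonoidAlgebra.single k (1:ℂ)) (insert k c.coeff.support) (Finset.subset_insert _ _)
    (Finsupp.support_single_subset.trans (by simp))]
  rw [show (∑ j ∈ insert k c.coeff.support, c.coeff j * (starRingEnd ℂ) ((AddMonoidAlgebra.single k (1:ℂ)).coeff j))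
      = ∑ j ∈ insert k c.coeff.support, if k = j then c.coeff j else 0 from
    Finset.sum_congr rfl fun j _ => by
      simp [AddMonoidAlgebra.coeff_single, Finsupp.single_apply, apply_ite (starRingEnd ℂ)]]
  rw [Finset.sum_ite_eq (insert k c.coeff.support) k (fun j => c.coeff j), if_pos (Finset.mem_insert_self _ _)]

lemma realValued_coeff {c : TrigPoly} (hc : RealValued c) (k : ℤ) :
    (starRingEnd ℂ) (c.coeff k) = c.coeff (-k) := by
  have hconj : ∀ u : ℝ, (starRingEnd ℂ) (teval c u) = teval c u := fun u =>
    Complex.conj_eq_iff_im.mpr (hc u)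
  have key : (∫ u in (-π)..π,
        (starRingEnd ℂ) (teval c u * (starRingEnd ℂ) (teval (AddMonoidAlgebra.single k (1:ℂ)) u)))
      = ∫ u in (-π)..π, teval c u * (starRingEnd ℂ) (teval (AddMonoidAlgebra.single (-k) (1:ℂ)) u) := by
    apply intervalIntegral.integral_congr
    intro u _
    simp only [map_mul, Complex.conj_conj, hconj u, teval_single]
    rw [← Complex.exp_conj]
    congr 2
    simp only [map_mul, Complex.conj_I, Complex.conj_ofReal, map_intCast]
    push_cast
    ring
  have h1 := congrArg (starRingEnd ℂ) (coeff_eq c k)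
  rw [← intervalIntegral_conj, key, coeff_eq] at h1
  have h2π : (2*(π:ℂ)) ≠ 0 := by
    simp [Complex.ofReal_ne_zero, Real.pi_ne_zero]
  have h1' : (starRingEnd ℂ) (2*(π:ℂ) * c.coeff k) = 2*(π:ℂ) * c.coeff (-k) := h1.symm
  rw [map_mul, show (starRingEnd ℂ) (2*(π:ℂ)) = 2*(π:ℂ) by rw [map_mul, Complex.conj_ofReal, map_ofNat]] at h1'
  exact mul_left_cancel₀ h2π h1'


noncomputable def starC (c : TrigPoly) : TrigPoly :=
  AddMonoidAlgebra.ofCoeff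
    (Finsupp.equivMapDomain (Equiv.neg ℤ) (Finsupp.mapRange (starRingEnd ℂ) (map_zero _) c.coeff))

lemma starC_apply (c : TrigPoly) (k : ℤ) : (starC c).coeff k = (starRingEnd ℂ) (c.coeff (-k)) := by
  simp [starC, Finsupp.equivMapDomain_apply, Finsupp.mapRange_apply]

lemma teval_starC (c : TrigPoly) (u : ℝ) :
    teval (starC c) u = (starRingEnd ℂ) (teval c u) := by
  rw [teval, starC, AddMonoidAlgebra.coeff_ofCoeff, Finsupp.sum_equivMapDomain,
    Finsupp.sum_mapRange_index
      (h := fun a m => m * Complex.exp (Complex.I * ((((Equiv.neg ℤ) a : ℤ)) : ℂ) * (u:ℂ)))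
      (fun a => zero_mul _)]
  simp only [teval, Finsupp.sum, map_sum]
  refine Finset.sum_congr rfl fun k _ => ?_
  rw [map_mul, ← Complex.exp_conj]
  congr 2
  · simp only [map_mul, Complex.conj_I, Complex.conj_ofReal, map_intCast, Equiv.neg_apply]
    push_cast
    ring

lemma conj_teval_Kop {y : TrigPoly} (hy : RealValued y) (u : ℝ) :
    (starRingEnd ℂ) (teval (Kop y) u) = teval (Kop y) u := by
  rw [← teval_starC]
  congr 1
  ext k
  rw [starC_apply, Kop, mulOp_apply, mulOp_apply, map_mul, realValued_coeff hy, neg_neg,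
    map_intCast, abs_neg]

lemma J_mul_real (z : TrigPoly) (hz : ∀ u : ℝ, (starRingEnd ℂ) (teval z u) = teval z u)
    (f g : TrigPoly) :
    (∫ u in (-π)..π, teval (z * f) u * (starRingEnd ℂ) (teval g u))
      = ∫ u in (-π)..π, teval f u * (starRingEnd ℂ) (teval (z * g) u) := by
  apply intervalIntegral.integral_congr
  intro u _
  simp only [teval_mul, map_mul, hz u]
  ring


lemma teval_expand (μ c g0 : ℝ) (y f : TrigPoly) (u : ℝ) :
    teval (S1mu μ c g0 y f) u
      = ((c^2 : ℝ):ℂ) * teval (Kmu μ f) u - (g0:ℂ) * teval f u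
        - (g0:ℂ) * (teval (y * Kmu μ f) u + teval (f * Kop y) u + teval (Kmu μ (y*f)) u) := by
  simp only [S1mu, teval_eq_lift, map_sub, map_add, _root_.map_smul, smul_eq_mul]
  push_cast
  ring

lemma integral_comb (a b : ℂ) (F1 F2 F3 F4 F5 : ℝ → ℂ)
    (h1 : IntervalIntegrable F1 volume (-π) π) (h2 : IntervalIntegrable F2 volume (-π) π)
    (h3 : IntervalIntegrable F3 volume (-π) π) (h4 : IntervalIntegrable F4 volume (-π) π)
    (h5 : IntervalIntegrable F5 volume (-π) π) :
    (∫ u in (-π)..π, (a * F1 u - b * F2 u - b * (F3 u + F4 u + F5 u)))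
      = a * (∫ u in (-π)..π, F1 u) - b * (∫ u in (-π)..π, F2 u)
        - b * ((∫ u in (-π)..π, F3 u) + (∫ u in (-π)..π, F4 u) + (∫ u in (-π)..π, F5 u)) := by
  rw [intervalIntegral.integral_sub ((h1.const_mul a).sub (h2.const_mul b))
      (((h3.add h4).add h5).const_mul b),
    intervalIntegral.integral_sub (h1.const_mul a) (h2.const_mul b),
    intervalIntegral.integral_const_mul, intervalIntegral.integral_const_mul,
    intervalIntegral.integral_const_mul,
    intervalIntegral.integral_add (h3.add h4) h5, intervalIntegral.integral_add h3 h4]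

/-- For real μ, c, g₀ and a real-valued 2π-periodic trigonometric polynomial y, the
quasiperiodic linearized Babenko operator Ŝ₁μ is self-adjoint with respect to the complex
L² inner product `⟪f, g⟫ = ∫ f ḡ du`: `⟪Ŝ₁μ f, g⟫ = ⟪f, Ŝ₁μ g⟫` for all trigonometric
polynomials f, g. -/
theorem S1mu_self_adjoint (μ c g0 : ℝ) (y : TrigPoly) (hy : RealValued y)
    (f g : TrigPoly) :
    ∫ u in (-π)..π, teval (S1mu μ c g0 y f) u * starRingEnd ℂ (teval g u)
      = ∫ u in (-π)..π, teval f u * starRingEnd ℂ (teval (S1mu μ c g0 y g) u) := by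
  have hconjy : ∀ u : ℝ, (starRingEnd ℂ) (teval y u) = teval y u := fun u =>
    Complex.conj_eq_iff_im.mpr (hy u)
  have Ji : ∀ p q : TrigPoly, IntervalIntegrable
      (fun u => teval p u * (starRingEnd ℂ) (teval q u)) volume (-π) π := fun p q =>
    ((teval_continuous p).mul
      (Complex.continuous_conj.comp (teval_continuous q))).intervalIntegrable _ _
  have JK : ∀ p q : TrigPoly,
      (∫ u in (-π)..π, teval (Kmu μ p) u * (starRingEnd ℂ) (teval q u))
        = ∫ u in (-π)..π, teval p u * (starRingEnd ℂ) (teval (Kmu μ q) u) := fun p q =>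
    J_mulOp _ (fun k => Complex.conj_ofReal _) p q
  have T3 : (∫ u in (-π)..π, teval (y * Kmu μ f) u * (starRingEnd ℂ) (teval g u))
      = ∫ u in (-π)..π, teval f u * (starRingEnd ℂ) (teval (Kmu μ (y * g)) u) :=
    (J_mul_real y hconjy (Kmu μ f) g).trans (JK f (y * g))
  have T4 : (∫ u in (-π)..π, teval (f * Kop y) u * (starRingEnd ℂ) (teval g u))
      = ∫ u in (-π)..π, teval f u * (starRingEnd ℂ) (teval (g * Kop y) u) := by
    rw [mul_comm f (Kop y), mul_comm g (Kop y)]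
    exact J_mul_real (Kop y) (conj_teval_Kop hy) f g
  have T5 : (∫ u in (-π)..π, teval (Kmu μ (y * f)) u * (starRingEnd ℂ) (teval g u))
      = ∫ u in (-π)..π, teval f u * (starRingEnd ℂ) (teval (y * Kmu μ g) u) :=
    (JK (y * f) g).trans (J_mul_real y hconjy f (Kmu μ g))
  calc (∫ u in (-π)..π, teval (S1mu μ c g0 y f) u * (starRingEnd ℂ) (teval g u))
      = ∫ u in (-π)..π, (((c^2:ℝ):ℂ) * (teval (Kmu μ f) u * (starRingEnd ℂ) (teval g u))
          - (g0:ℂ) * (teval f u * (starRingEnd ℂ) (teval g u))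
          - (g0:ℂ) * ((teval (y * Kmu μ f) u * (starRingEnd ℂ) (teval g u))
              + (teval (f * Kop y) u * (starRingEnd ℂ) (teval g u))
              + (teval (Kmu μ (y * f)) u * (starRingEnd ℂ) (teval g u)))) := by
        apply intervalIntegral.integral_congr
        intro u _
        simp only [teval_expand]
        ring
    _ = ((c^2:ℝ):ℂ) * (∫ u in (-π)..π, teval (Kmu μ f) u * (starRingEnd ℂ) (teval g u))
        - (g0:ℂ) * (∫ u in (-π)..π, teval f u * (starRingEnd ℂ) (teval g u))
        - (g0:ℂ) * ((∫ u in (-π)..π, teval (y * Kmu μ f) u * (starRingEnd ℂ) (teval g u))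
            + (∫ u in (-π)..π, teval (f * Kop y) u * (starRingEnd ℂ) (teval g u))
            + (∫ u in (-π)..π, teval (Kmu μ (y * f)) u * (starRingEnd ℂ) (teval g u))) :=
      integral_comb _ _ _ _ _ _ _ (Ji _ _) (Ji _ _) (Ji _ _) (Ji _ _) (Ji _ _)
    _ = ((c^2:ℝ):ℂ) * (∫ u in (-π)..π, teval f u * (starRingEnd ℂ) (teval (Kmu μ g) u))
        - (g0:ℂ) * (∫ u in (-π)..π, teval f u * (starRingEnd ℂ) (teval g u))
        - (g0:ℂ) * ((∫ u in (-π)..π, teval f u * (starRingEnd ℂ) (teval (y * Kmu μ g) u))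
            + (∫ u in (-π)..π, teval f u * (starRingEnd ℂ) (teval (g * Kop y) u))
            + (∫ u in (-π)..π, teval f u * (starRingEnd ℂ) (teval (Kmu μ (y * g)) u))) := by
        rw [JK f g, T3, T4, T5]
        ring
    _ = ∫ u in (-π)..π, (((c^2:ℝ):ℂ) * (teval f u * (starRingEnd ℂ) (teval (Kmu μ g) u))
          - (g0:ℂ) * (teval f u * (starRingEnd ℂ) (teval g u))
          - (g0:ℂ) * ((teval f u * (starRingEnd ℂ) (teval (y * Kmu μ g) u))
              + (teval f u * (starRingEnd ℂ) (teval (g * Kop y) u))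
              + (teval f u * (starRingEnd ℂ) (teval (Kmu μ (y * g)) u)))) :=
      (integral_comb _ _ _ _ _ _ _ (Ji _ _) (Ji _ _) (Ji _ _) (Ji _ _) (Ji _ _)).symm
    _ = ∫ u in (-π)..π, teval f u * (starRingEnd ℂ) (teval (S1mu μ c g0 y g) u) := by
        apply intervalIntegral.integral_congr
        intro u _
        simp only [teval_expand, map_sub, map_add, map_mul, Complex.conj_ofReal]
        ring
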